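/- For all natural numbers n ≥ 1 and m ≥ 3, in the sunlet graph with degree n, S_m^n, every base vertex has eccentricity exactly ⌊m/2⌋ + n, and every pendant (non-base) vertex has eccentricity strictly greater than the eccentricity of the base vertex of its branch. -/

import Mathlib

open SimpleGraph Finset

/-- The sunlet graph with degree `n` on the cycle `C_m`, `S_m^n`: a path on `n`
new vertices (a branch) is attached to each vertex of the cycle `C_m`.
The vertex `(i, 0)` is the `i`-th base vertex (on the cycle) and, for
`1 ≤ j ≤ n`, the vertex `(i, j)` is the `j`-th pendant vertex of the branch
attached at `(i, 0)`. -/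
def sunletDeg (m n : ℕ) : SimpleGraph (Fin m × Fin (n + 1)) :=
  SimpleGraph.fromRel (fun a b =>
    (a.2 = 0 ∧ b.2 = 0 ∧ (SimpleGraph.cycleGraph m).Adj a.1 b.1) ∨
    (a.1 = b.1 ∧ (a.2 : ℕ) + 1 = (b.2 : ℕ)))

/-- The eccentricity of a vertex: the maximum distance from `v` to any vertex. -/
noncomputable def eccentricity {V : Type*} [Fintype V] (G : SimpleGraph V) (v : V) : ℕ :=
  Finset.univ.sup fun u => G.dist u v

/-- The radius of a graph: the minimum eccentricity over all vertices. -/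
noncomputable def graphRadius (V : Type*) [Fintype V] (G : SimpleGraph V) : ℕ :=
  sInf {e : ℕ | ∃ v : V, eccentricity G v = e}


section
open Fin.NatCast Fin.CommRing

private lemma sunlet_adj_branch {m n : ℕ} (a : Fin m) (j k : Fin (n+1))
    (h : (j:ℕ)+1 = (k:ℕ)) : (sunletDeg m n).Adj (a, j) (a, k) := by
  rw [sunletDeg, SimpleGraph.fromRel_adj]
  refine ⟨?_, Or.inl (Or.inr ⟨rfl, h⟩)⟩
  intro he
  rw [Prod.mk.injEq] at he
  have := congrArg Fin.val he.2
  omega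

private lemma sunlet_adj_cycle {m n : ℕ} {a b : Fin m} (h : (cycleGraph m).Adj a b) :
    (sunletDeg m n).Adj (a, (0 : Fin (n+1))) (b, 0) := by
  rw [sunletDeg, SimpleGraph.fromRel_adj]
  refine ⟨?_, Or.inl (Or.inl ⟨rfl, rfl, h⟩)⟩
  intro he
  rw [Prod.mk.injEq] at he
  exact h.ne he.1

private lemma sunlet_branch_walk {m n : ℕ} (a : Fin m) (k : ℕ) (hk : k < n+1) :
    ∃ w : (sunletDeg m n).Walk (a, (⟨k, hk⟩ : Fin (n+1))) (a, 0), w.length = k := by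
  induction k with
  | zero =>
    refine ⟨Walk.nil.copy (by ext <;> simp) rfl, by simp⟩
  | succ k ih =>
    obtain ⟨w, hw⟩ := ih (by omega)
    have hadj : (sunletDeg m n).Adj (a, (⟨k+1, hk⟩ : Fin (n+1))) (a, ⟨k, by omega⟩) :=
      (sunlet_adj_branch a ⟨k, by omega⟩ ⟨k+1, hk⟩ rfl).symm
    exact ⟨Walk.cons hadj w, by simp [hw]⟩

private lemma sunlet_branch_walk' {m n : ℕ} (a : Fin m) (j : Fin (n+1)) :
    ∃ w : (sunletDeg m n).Walk (a, j) (a, 0), w.length = j.val := by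
  obtain ⟨w, hw⟩ := sunlet_branch_walk a j.val j.isLt
  exact ⟨w.copy (by simp) rfl, by simpa⟩

private lemma sunlet_cycle_walk {m n : ℕ} [NeZero m] (hm : 3 ≤ m) (t : ℕ) (a : Fin m) :
    ∃ w : (sunletDeg m n).Walk (a, (0 : Fin (n+1))) (a + (t : Fin m), 0), w.length = t := by
  induction t generalizing a with
  | zero => exact ⟨Walk.nil.copy rfl (by simp), by simp⟩
  | succ t ih =>
    obtain ⟨w, hw⟩ := ih (a + 1)
    have hadj : (sunletDeg m n).Adj (a, (0 : Fin (n+1))) (a + 1, 0) := by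
      apply sunlet_adj_cycle
      rw [cycleGraph_adj']
      right
      rw [add_sub_cancel_left, Fin.val_one']
      exact Nat.mod_eq_of_lt (by omega)
    refine ⟨(Walk.cons hadj w).copy rfl ?_, by rw [Walk.length_copy, Walk.length_cons, hw]⟩
    rw [Prod.mk.injEq]
    refine ⟨by push_cast; ring, rfl⟩

private lemma fin_sub_val_add {m : ℕ} [NeZero m] (hm : 3 ≤ m) (a b : Fin m) (hne : a ≠ b) :
    (a - b).val + (b - a).val = m := by
  have h0 : ((a - b) + (b - a)) = (0 : Fin m) := by ring
  have hv := congrArg Fin.val h0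
  rw [Fin.add_def] at hv
  have hv0 : ((a - b).val + (b - a).val) % m = 0 := by simpa using hv
  have h1 : (a - b).val < m := Fin.is_lt _
  have h2 : (b - a).val < m := Fin.is_lt _
  have h3 : (a - b).val ≠ 0 := by
    intro h
    apply hne
    have : a - b = 0 := Fin.ext (by simp [h])
    have := sub_eq_zero.mp this
    exact this
  obtain ⟨c, hc⟩ := Nat.dvd_of_mod_eq_zero hv0
  rcases c with _ | _ | c
  · omega
  · omega
  · have hexp : m * (c + 1 + 1) = m * c + 2 * m := by ring
    omega

private lemma sunlet_base_walk {m n : ℕ} [NeZero m] (hm : 3 ≤ m) (a b : Fin m) :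
    ∃ w : (sunletDeg m n).Walk (a, (0 : Fin (n+1))) (b, 0), w.length ≤ m / 2 := by
  by_cases hab : a = b
  · subst hab; exact ⟨Walk.nil, by simp⟩
  set x := (b - a).val with hx
  have hxm : x < m := Fin.is_lt _
  have hab' : a + (x : Fin m) = b := by rw [hx, Fin.cast_val_eq_self]; ring
  by_cases hle : x ≤ m / 2
  · obtain ⟨w, hw⟩ := sunlet_cycle_walk (n := n) hm x a
    exact ⟨w.copy rfl (by rw [hab']), by rw [Walk.length_copy, hw]; omega⟩
  · set y := (a - b).val with hy
    have hsum : y + x = m := fin_sub_val_add hm a b hab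
    have hba : b + (y : Fin m) = a := by rw [hy, Fin.cast_val_eq_self]; ring
    obtain ⟨w, hw⟩ := sunlet_cycle_walk (n := n) hm y b
    refine ⟨(w.copy rfl (by rw [hba])).reverse, ?_⟩
    rw [Walk.length_reverse, Walk.length_copy, hw]
    omega

private lemma sunlet_reachable {m n : ℕ} (hm : 3 ≤ m) (u v : Fin m × Fin (n+1)) :
    (sunletDeg m n).Reachable u v := by
  obtain ⟨a, k⟩ := u; obtain ⟨b, j⟩ := v
  haveI : NeZero m := ⟨by omega⟩
  obtain ⟨w1, _⟩ := sunlet_branch_walk' (n := n) a k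
  obtain ⟨w2, _⟩ := sunlet_base_walk (n := n) hm a b
  obtain ⟨w3, _⟩ := sunlet_branch_walk' (n := n) b j
  exact ⟨(w1.append w2).append w3.reverse⟩

private lemma walk_lipschitz {V : Type*} {G : SimpleGraph V} (φ : V → ℤ)
    (hφ : ∀ a b, G.Adj a b → |φ a - φ b| ≤ 1) :
    ∀ {u v : V} (w : G.Walk u v), |φ u - φ v| ≤ w.length := by
  intro u v w
  induction w with
  | nil => simp
  | @cons u x v h p ih =>
    calc |φ u - φ v| ≤ |φ u - φ x| + |φ x - φ v| := abs_sub_le _ _ _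
    _ ≤ 1 + p.length := add_le_add (hφ _ _ h) ih
    _ = ((Walk.cons h p).length : ℤ) := by rw [Walk.length_cons]; push_cast; ring

private lemma dist_lower_bound {V : Type*} {G : SimpleGraph V} (φ : V → ℤ)
    (hφ : ∀ a b, G.Adj a b → |φ a - φ b| ≤ 1) {u v : V} (h : G.Reachable u v) :
    |φ u - φ v| ≤ (G.dist u v : ℤ) := by
  obtain ⟨w, hw⟩ := h.exists_walk_length_eq_dist
  rw [← hw]
  exact_mod_cast walk_lipschitz φ hφ w

private lemma dC_min_step {m : ℕ} [NeZero m] (hm : 3 ≤ m) {a b p : Fin m} (hc : (cycleGraph m).Adj a b) :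
    min ((a-p).val) (m - (a-p).val) ≤ min ((b-p).val) (m - (b-p).val) + 1 ∧
    min ((b-p).val) (m - (b-p).val) ≤ min ((a-p).val) (m - (a-p).val) + 1 := by
  rw [cycleGraph_adj'] at hc
  have key : ∀ u v : Fin m, (u - v).val = 1 →
      min ((u-p).val) (m - (u-p).val) ≤ min ((v-p).val) (m - (v-p).val) + 1 ∧
      min ((v-p).val) (m - (v-p).val) ≤ min ((u-p).val) (m - (u-p).val) + 1 := by
    intro u v h1
    have hxm : (u-p).val < m := Fin.is_lt _
    have hym : (v-p).val < m := Fin.is_lt _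
    have heq : u - p = (v - p) + (u - v) := by ring
    have hv := congrArg Fin.val heq
    rw [Fin.add_def, h1] at hv
    have hv' : (u - p).val = ((v - p).val + 1) % m := by simpa using hv
    rcases Nat.lt_or_ge ((v-p).val + 1) m with h2 | h2
    · rw [Nat.mod_eq_of_lt h2] at hv'; omega
    · have h3 : (v-p).val + 1 = m := by omega
      rw [h3, Nat.mod_self] at hv'; omega
  rcases hc with h1 | h1
  · exact key a b h1
  · exact (key b a h1).symm



private lemma sunlet_dist_le {m n : ℕ} [NeZero m] (hm : 3 ≤ m)
    (u : Fin m × Fin (n+1)) (i : Fin m) :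
    (sunletDeg m n).dist u (i, (0 : Fin (n+1))) ≤ m / 2 + n := by
  obtain ⟨a, k⟩ := u
  obtain ⟨w1, h1⟩ := sunlet_branch_walk' (n := n) a k
  obtain ⟨w2, h2⟩ := sunlet_base_walk (n := n) hm a i
  have hle := SimpleGraph.dist_le (w1.append w2)
  rw [Walk.length_append, h1] at hle
  have := k.isLt
  omega

private lemma sunlet_ecc_lower {m n : ℕ} (hm : 3 ≤ m) (i : Fin m) (j : Fin (n+1)) :
    m / 2 + n + j.val ≤ eccentricity (sunletDeg m n) (i, j) := by
  haveI : NeZero m := ⟨by omega⟩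
  set p : Fin m := i + ⟨m / 2, by omega⟩ with hp
  set φ : Fin m × Fin (n+1) → ℤ := fun v =>
    ((min ((v.1 - p).val) (m - (v.1 - p).val) : ℕ) : ℤ) +
      (if v.1 = p then -(v.2.val : ℤ) else (v.2.val : ℤ)) with hphi
  have hφ : ∀ a b, (sunletDeg m n).Adj a b → |φ a - φ b| ≤ 1 := by
    rintro ⟨a, ja⟩ ⟨b, jb⟩ hadj
    rw [sunletDeg, SimpleGraph.fromRel_adj] at hadj
    obtain ⟨hne, hrel⟩ := hadj
    rw [abs_le]
    have hcyc : ∀ (a b : Fin m) (ja jb : Fin (n+1)), ja = 0 → jb = 0 →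
        (cycleGraph m).Adj a b →
        -1 ≤ φ (a, ja) - φ (b, jb) ∧ φ (a, ja) - φ (b, jb) ≤ 1 := by
      intro a b ja jb ha hb hc
      subst ha; subst hb
      obtain ⟨e1, e2⟩ := dC_min_step hm (p := p) hc
      simp only [hphi, Fin.val_zero, Nat.cast_zero, neg_zero, ite_self, add_zero]
      constructor <;> omega
    have hbr : ∀ (a : Fin m) (ja jb : Fin (n+1)), (ja : ℕ) + 1 = (jb : ℕ) →
        -1 ≤ φ (a, ja) - φ (a, jb) ∧ φ (a, ja) - φ (a, jb) ≤ 1 := by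
      intro a ja jb hj
      simp only [hphi]
      split_ifs <;> constructor <;> push_cast <;> omega
    rcases hrel with (⟨h1, h2, hc⟩ | ⟨heq, hj⟩) | (⟨h1, h2, hc⟩ | ⟨heq, hj⟩)
    · exact hcyc a b ja jb h1 h2 hc
    · cases heq
      exact hbr a ja jb hj
    · exact hcyc a b ja jb h2 h1 hc.symm
    · cases heq
      obtain ⟨g1, g2⟩ := hbr a jb ja hj
      constructor <;> omega
  -- values
  have hpi : p - i = (⟨m / 2, by omega⟩ : Fin m) := by rw [hp]; exact add_sub_cancel_left i _
  have hpiv : (p - i).val = m / 2 := by rw [hpi]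
  have hipne : i ≠ p := by
    intro h
    rw [h, sub_self] at hpi
    have := congrArg Fin.val hpi
    simp at this
    omega
  have hipv : (i - p).val = m - m / 2 := by
    have := fin_sub_val_add hm i p hipne
    omega
  have hppv : (p - p).val = 0 := by rw [sub_self]; simp
  set u : Fin m × Fin (n+1) := (p, ⟨n, by omega⟩) with hu
  have hphiu : φ u = -(n : ℤ) := by
    simp only [hphi, hu, hppv, if_pos rfl]
    simp
  have hphiv : φ (i, j) = ((m / 2 : ℕ) : ℤ) + (j.val : ℤ) := by
    simp only [hphi, hipv, if_neg hipne]
    congr 1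
    have h1 : min (m - m / 2) (m - (m - m / 2)) = m / 2 := by omega
    rw [h1]
  have hr := sunlet_reachable hm u (i, j)
  have hd := dist_lower_bound φ hφ hr
  rw [hphiu, hphiv] at hd
  have habs : |(-(n : ℤ)) - (((m / 2 : ℕ) : ℤ) + (j.val : ℤ))| =
      (n : ℤ) + ((m / 2 : ℕ) : ℤ) + (j.val : ℤ) := by
    rw [show (-(n : ℤ)) - (((m / 2 : ℕ) : ℤ) + (j.val : ℤ)) =
      -((n : ℤ) + ((m / 2 : ℕ) : ℤ) + (j.val : ℤ)) by ring, abs_neg,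
      abs_of_nonneg (by positivity)]
  rw [habs] at hd
  have hdn : m / 2 + n + j.val ≤ (sunletDeg m n).dist u (i, j) := by omega
  calc m / 2 + n + j.val ≤ (sunletDeg m n).dist u (i, j) := hdn
  _ ≤ eccentricity (sunletDeg m n) (i, j) :=
      Finset.le_sup (f := fun x => (sunletDeg m n).dist x (i, j)) (Finset.mem_univ u)
end

/-- In `S_m^n` (`n ≥ 1`, `m ≥ 3`), every base vertex has eccentricity exactly
`⌊m/2⌋ + n`, and every pendant (non-base) vertex has eccentricity strictly
greater than the eccentricity of the base vertex of its branch. -/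
theorem sunletDeg_eccentricity (m n : ℕ) (hm : 3 ≤ m) (hn : 1 ≤ n) :
    (∀ i : Fin m, eccentricity (sunletDeg m n) (i, (0 : Fin (n + 1))) = m / 2 + n) ∧
    (∀ (i : Fin m) (j : Fin (n + 1)), j ≠ 0 →
      eccentricity (sunletDeg m n) (i, (0 : Fin (n + 1))) <
        eccentricity (sunletDeg m n) (i, j)) := by
  haveI : NeZero m := ⟨by omega⟩
  have hbase : ∀ i : Fin m, eccentricity (sunletDeg m n) (i, (0 : Fin (n + 1))) = m / 2 + n := by
    intro i
    apply le_antisymm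
    · unfold eccentricity
      apply Finset.sup_le
      intro u _
      exact sunlet_dist_le hm u i
    · simpa using sunlet_ecc_lower (n := n) hm i 0
  refine ⟨hbase, ?_⟩
  intro i j hj
  have h1 := sunlet_ecc_lower (n := n) hm i j
  have hjv : j.val ≠ 0 := by
    intro h
    exact hj (Fin.ext (by simpa using h))
  rw [hbase i]
  omega
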